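/- For every base B, all formulas φ, ψ, χ, and each sign * ∈ {+,−}: if ⊩+_B φ∨ψ, φ;∅ ⊩*_B χ and ψ;∅ ⊩*_B χ, then ⊩*_B χ. -/
import Mathlib


/-- Signs: `pos` for proof/assertion, `neg` for refutation/rejection. -/
inductive Sign where
  | pos
  | neg
deriving DecidableEq

/-- The dual of a sign. -/
def Sign.dual : Sign → Sign
  | .pos => .neg
  | .neg => .pos

/-- Formulas of the bilateral logic 2Int. -/
inductive Form where
  | atom : ℕ → Form
  | bot : Form
  | top : Form
  | and : Form → Form → Form
  | or : Form → Form → Form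
  | imp : Form → Form → Form
  | coimp : Form → Form → Form
deriving DecidableEq

/-- A premise of an atomic rule: the sign required (proof or refutation), the premise atom,
and the sets of dischargeable atomic proof assumptions and refutation assumptions. -/
structure Premise where
  sign : Sign
  concl : ℕ
  dischargePf : Set ℕ
  dischargeRf : Set ℕ

/-- An atomic rule: a list of premises, a marking as proof (`pos`) or refutation (`neg`) rule,
and an atomic conclusion. -/
structure AtomicRule where
  prems : List Premise
  sign : Sign
  concl : ℕ

/-- A bilateral atomic system (base) is a set of atomic rules. -/
abbrev Base := Set AtomicRule

/-- `AtDeriv B s Γ Δ p` formalizes `Γ;Δ ⊢^s_B p`: there is a deduction in `B` of the atom `p`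
whose open atomic proof assumptions are contained in `Γ` and open atomic refutation
assumptions in `Δ`, consisting of a single assumption of sign `s` or ending with a rule of
sign `s`. -/
inductive AtDeriv (B : Base) : Sign → Set ℕ → Set ℕ → ℕ → Prop
  | hypPos {Γ Δ : Set ℕ} {p : ℕ} : p ∈ Γ → AtDeriv B .pos Γ Δ p
  | hypNeg {Γ Δ : Set ℕ} {p : ℕ} : p ∈ Δ → AtDeriv B .neg Γ Δ p
  | app {Γ Δ : Set ℕ} {R : AtomicRule} (hR : R ∈ B)
      (h : ∀ pr ∈ R.prems,
        AtDeriv B pr.sign (Γ ∪ pr.dischargePf) (Δ ∪ pr.dischargeRf) pr.concl) :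
      AtDeriv B R.sign Γ Δ R.concl

/-- Bilateral validity (support) `⊩^s_B φ`, by recursion on the formula. -/
def Supp : Form → Base → Sign → Prop
  | .atom p, B, s => AtDeriv B s ∅ ∅ p
  | .bot, B, .pos => ∀ p : ℕ, AtDeriv B .pos ∅ ∅ p ∧ AtDeriv B .neg ∅ ∅ p
  | .bot, _, .neg => True
  | .top, _, .pos => True
  | .top, B, .neg => ∀ p : ℕ, AtDeriv B .pos ∅ ∅ p ∧ AtDeriv B .neg ∅ ∅ p
  | .and φ ψ, B, .pos => Supp φ B .pos ∧ Supp ψ B .pos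
  | .and φ ψ, B, .neg => ∀ C : Base, B ⊆ C → ∀ p : ℕ,
      (((∀ D : Base, C ⊆ D → Supp φ D .neg → AtDeriv D .pos ∅ ∅ p) ∧
        (∀ D : Base, C ⊆ D → Supp ψ D .neg → AtDeriv D .pos ∅ ∅ p)) →
        AtDeriv C .pos ∅ ∅ p) ∧
      (((∀ D : Base, C ⊆ D → Supp φ D .neg → AtDeriv D .neg ∅ ∅ p) ∧
        (∀ D : Base, C ⊆ D → Supp ψ D .neg → AtDeriv D .neg ∅ ∅ p)) →
        AtDeriv C .neg ∅ ∅ p)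
  | .or φ ψ, B, .pos => ∀ C : Base, B ⊆ C → ∀ p : ℕ,
      (((∀ D : Base, C ⊆ D → Supp φ D .pos → AtDeriv D .pos ∅ ∅ p) ∧
        (∀ D : Base, C ⊆ D → Supp ψ D .pos → AtDeriv D .pos ∅ ∅ p)) →
        AtDeriv C .pos ∅ ∅ p) ∧
      (((∀ D : Base, C ⊆ D → Supp φ D .pos → AtDeriv D .neg ∅ ∅ p) ∧
        (∀ D : Base, C ⊆ D → Supp ψ D .pos → AtDeriv D .neg ∅ ∅ p)) →
        AtDeriv C .neg ∅ ∅ p)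
  | .or φ ψ, B, .neg => Supp φ B .neg ∧ Supp ψ B .neg
  | .imp φ ψ, B, .pos => ∀ C : Base, B ⊆ C → Supp φ C .pos → Supp ψ C .pos
  | .imp φ ψ, B, .neg => Supp φ B .pos ∧ Supp ψ B .neg
  | .coimp φ ψ, B, .pos => Supp φ B .pos ∧ Supp ψ B .neg
  | .coimp φ ψ, B, .neg => ∀ C : Base, B ⊆ C → Supp ψ C .neg → Supp φ C .neg

open Classical in
/-- `Cons B Γ Δ s χ` formalizes `Γ;Δ ⊩^s_B χ`. -/
def Cons (B : Base) (Γ Δ : Set Form) (s : Sign) (χ : Form) : Prop :=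
  if Γ = ∅ ∧ Δ = ∅ then Supp χ B s
  else ∀ C : Base, B ⊆ C →
    (∀ φ ∈ Γ, Supp φ C .pos) → (∀ ψ ∈ Δ, Supp ψ C .neg) → Supp χ C s


lemma atderiv_mono {B C : Base} (hBC : B ⊆ C) {s : Sign} {Γ Δ : Set ℕ} {p : ℕ}
    (h : AtDeriv B s Γ Δ p) : AtDeriv C s Γ Δ p := by
  induction h with
  | hypPos h => exact .hypPos h
  | hypNeg h => exact .hypNeg h
  | app hR h ih => exact .app (hBC hR) (fun pr hpr => ih pr hpr)

lemma supp_mono (χ : Form) : ∀ {B C : Base}, B ⊆ C → ∀ {s : Sign},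
    Supp χ B s → Supp χ C s := by
  induction χ with
  | atom p =>
    intro B C hBC s h
    cases s <;> exact atderiv_mono hBC h
  | bot =>
    intro B C hBC s h
    cases s with
    | pos => exact fun p => ⟨atderiv_mono hBC (h p).1, atderiv_mono hBC (h p).2⟩
    | neg => trivial
  | top =>
    intro B C hBC s h
    cases s with
    | pos => trivial
    | neg => exact fun p => ⟨atderiv_mono hBC (h p).1, atderiv_mono hBC (h p).2⟩
  | and a b iha ihb =>
    intro B C hBC s h
    cases s with
    | pos => exact ⟨iha hBC h.1, ihb hBC h.2⟩
    | neg => exact fun D hCD => h D (hBC.trans hCD)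
  | or a b iha ihb =>
    intro B C hBC s h
    cases s with
    | pos => exact fun D hCD => h D (hBC.trans hCD)
    | neg => exact ⟨iha hBC h.1, ihb hBC h.2⟩
  | imp a b iha ihb =>
    intro B C hBC s h
    cases s with
    | pos => exact fun D hCD => h D (hBC.trans hCD)
    | neg => exact ⟨iha hBC h.1, ihb hBC h.2⟩
  | coimp a b iha ihb =>
    intro B C hBC s h
    cases s with
    | pos => exact ⟨iha hBC h.1, ihb hBC h.2⟩
    | neg => exact fun D hCD => h D (hBC.trans hCD)

lemma or_elim_main (φ ψ : Form) : ∀ χ : Form, ∀ (s : Sign) (B : Base),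
    Supp (φ.or ψ) B .pos →
    (∀ C : Base, B ⊆ C → Supp φ C .pos → Supp χ C s) →
    (∀ C : Base, B ⊆ C → Supp ψ C .pos → Supp χ C s) →
    Supp χ B s := by
  intro χ
  induction χ with
  | atom p =>
    intro s B hor h1 h2
    cases s with
    | pos => exact (hor B subset_rfl p).1 ⟨fun D hD hφ => h1 D hD hφ,
        fun D hD hψ => h2 D hD hψ⟩
    | neg => exact (hor B subset_rfl p).2 ⟨fun D hD hφ => h1 D hD hφ,
        fun D hD hψ => h2 D hD hψ⟩
  | bot =>
    intro s B hor h1 h2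
    cases s with
    | pos =>
      intro p
      refine ⟨(hor B subset_rfl p).1 ⟨fun D hD hφ => (h1 D hD hφ p).1,
          fun D hD hψ => (h2 D hD hψ p).1⟩,
        (hor B subset_rfl p).2 ⟨fun D hD hφ => (h1 D hD hφ p).2,
          fun D hD hψ => (h2 D hD hψ p).2⟩⟩
    | neg => trivial
  | top =>
    intro s B hor h1 h2
    cases s with
    | pos => trivial
    | neg =>
      intro p
      refine ⟨(hor B subset_rfl p).1 ⟨fun D hD hφ => (h1 D hD hφ p).1,
          fun D hD hψ => (h2 D hD hψ p).1⟩,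
        (hor B subset_rfl p).2 ⟨fun D hD hφ => (h1 D hD hφ p).2,
          fun D hD hψ => (h2 D hD hψ p).2⟩⟩
  | and a b iha ihb =>
    intro s B hor h1 h2
    cases s with
    | pos =>
      exact ⟨iha .pos B hor (fun C h hφ => (h1 C h hφ).1) (fun C h hψ => (h2 C h hψ).1),
        ihb .pos B hor (fun C h hφ => (h1 C h hφ).2) (fun C h hψ => (h2 C h hψ).2)⟩
    | neg =>
      intro C hBC p
      constructor
      · intro H
        exact (hor C hBC p).1
          ⟨fun D hCD hφ => (h1 D (hBC.trans hCD) hφ D subset_rfl p).1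
              ⟨fun E hDE => H.1 E (hCD.trans hDE), fun E hDE => H.2 E (hCD.trans hDE)⟩,
           fun D hCD hψ => (h2 D (hBC.trans hCD) hψ D subset_rfl p).1
              ⟨fun E hDE => H.1 E (hCD.trans hDE), fun E hDE => H.2 E (hCD.trans hDE)⟩⟩
      · intro H
        exact (hor C hBC p).2
          ⟨fun D hCD hφ => (h1 D (hBC.trans hCD) hφ D subset_rfl p).2
              ⟨fun E hDE => H.1 E (hCD.trans hDE), fun E hDE => H.2 E (hCD.trans hDE)⟩,
           fun D hCD hψ => (h2 D (hBC.trans hCD) hψ D subset_rfl p).2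
              ⟨fun E hDE => H.1 E (hCD.trans hDE), fun E hDE => H.2 E (hCD.trans hDE)⟩⟩
  | or a b iha ihb =>
    intro s B hor h1 h2
    cases s with
    | pos =>
      intro C hBC p
      constructor
      · intro H
        exact (hor C hBC p).1
          ⟨fun D hCD hφ => (h1 D (hBC.trans hCD) hφ D subset_rfl p).1
              ⟨fun E hDE => H.1 E (hCD.trans hDE), fun E hDE => H.2 E (hCD.trans hDE)⟩,
           fun D hCD hψ => (h2 D (hBC.trans hCD) hψ D subset_rfl p).1
              ⟨fun E hDE => H.1 E (hCD.trans hDE), fun E hDE => H.2 E (hCD.trans hDE)⟩⟩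
      · intro H
        exact (hor C hBC p).2
          ⟨fun D hCD hφ => (h1 D (hBC.trans hCD) hφ D subset_rfl p).2
              ⟨fun E hDE => H.1 E (hCD.trans hDE), fun E hDE => H.2 E (hCD.trans hDE)⟩,
           fun D hCD hψ => (h2 D (hBC.trans hCD) hψ D subset_rfl p).2
              ⟨fun E hDE => H.1 E (hCD.trans hDE), fun E hDE => H.2 E (hCD.trans hDE)⟩⟩
    | neg =>
      exact ⟨iha .neg B hor (fun C h hφ => (h1 C h hφ).1) (fun C h hψ => (h2 C h hψ).1),
         ihb .neg B hor (fun C h hφ => (h1 C h hφ).2) (fun C h hψ => (h2 C h hψ).2)⟩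
  | imp a b iha ihb =>
    intro s B hor h1 h2
    cases s with
    | pos =>
      intro C hBC ha
      exact ihb .pos C (fun D hCD => hor D (hBC.trans hCD))
        (fun D hCD hφ => h1 D (hBC.trans hCD) hφ D subset_rfl (supp_mono a hCD ha))
        (fun D hCD hψ => h2 D (hBC.trans hCD) hψ D subset_rfl (supp_mono a hCD ha))
    | neg =>
      exact ⟨iha .pos B hor (fun C h hφ => (h1 C h hφ).1) (fun C h hψ => (h2 C h hψ).1),
        ihb .neg B hor (fun C h hφ => (h1 C h hφ).2) (fun C h hψ => (h2 C h hψ).2)⟩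
  | coimp a b iha ihb =>
    intro s B hor h1 h2
    cases s with
    | pos =>
      exact ⟨iha .pos B hor (fun C h hφ => (h1 C h hφ).1) (fun C h hψ => (h2 C h hψ).1),
        ihb .neg B hor (fun C h hφ => (h1 C h hφ).2) (fun C h hψ => (h2 C h hψ).2)⟩
    | neg =>
      intro C hBC hb
      exact iha .neg C (fun D hCD => hor D (hBC.trans hCD))
        (fun D hCD hφ => h1 D (hBC.trans hCD) hφ D subset_rfl (supp_mono b hCD hb))
        (fun D hCD hψ => h2 D (hBC.trans hCD) hψ D subset_rfl (supp_mono b hCD hb))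


theorem disjunction_general (B : Base) (φ ψ χ : Form) (s : Sign)
    (hor : Supp (φ.or ψ) B .pos)
    (h1 : Cons B {φ} ∅ s χ) (h2 : Cons B {ψ} ∅ s χ) :
    Supp χ B s := by
  rw [Cons, if_neg (fun h => (Set.singleton_ne_empty φ) h.1)] at h1
  rw [Cons, if_neg (fun h => (Set.singleton_ne_empty ψ) h.1)] at h2
  exact or_elim_main φ ψ χ s B hor
    (fun C hC hφ => h1 C hC (fun α hα => by simp only [Set.mem_singleton_iff] at hα; subst hα; exact hφ)
      (fun β hβ => absurd hβ (Set.notMem_empty β)))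
    (fun C hC hψ => h2 C hC (fun α hα => by simp only [Set.mem_singleton_iff] at hα; subst hα; exact hψ)
      (fun β hβ => absurd hβ (Set.notMem_empty β)))
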